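/- arXiv:1509.08859 — 3 statements merged into one kernel-verified Lean document; each statement's English description precedes it below -/
import Mathlib

section
/- (Fáry–Rédei; Rogers–Shephard; Ahn–Brass–Shin) Let K and K' be nonempty compact convex sets in EuclideanSpace ℝ (Fin d) and let t be a fixed vector. Then the function g : ℝ → ℝ defined by g(x) = vol(convexHull ℝ (K ∪ ((x • t) +ᵥ K'))) is convex on ℝ. -/
open MeasureTheory Pointwise Set


lemma slice_ineq (n : ℕ) (u v : ℝ) (hu : 0 ≤ u) (hv : 0 ≤ v)
    (A B C : Set (ℝ × (Fin n → ℝ)))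
    (hA : IsCompact A) (hAc : Convex ℝ A)
    (hB : IsCompact B) (hBc : Convex ℝ B)
    (hC : IsCompact C) (hCc : Convex ℝ C)
    (H : ∀ p ∈ C, ∃ qa ∈ A, ∃ qb ∈ B,
      p.1 = u * qa.1 + v * qb.1 ∧ qa.2 = p.2 ∧ qb.2 = p.2) :
    volume C ≤ ENNReal.ofReal u * volume A + ENNReal.ofReal v * volume B := by
  have mA : MeasurableSet A := hA.isClosed.measurableSet
  have mB : MeasurableSet B := hB.isClosed.measurableSet
  have mC : MeasurableSet C := hC.isClosed.measurableSet
  -- slices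
  set sl : Set (ℝ × (Fin n → ℝ)) → (Fin n → ℝ) → Set ℝ :=
    fun S h => (fun r => (r, h)) ⁻¹' S with hsl
  have slconv : ∀ (S : Set (ℝ × (Fin n → ℝ))), Convex ℝ S → ∀ h, Convex ℝ (sl S h) := by
    intro S hS h r1 hr1 r2 hr2 a b ha hb hab
    have : (a • r1 + b • r2, h) = a • ((r1 : ℝ), h) + b • ((r2 : ℝ), h) := by
      ext
      · simp
      · simp only [Prod.snd_add, Prod.smul_snd]
        rw [← add_smul, hab, one_smul]
    simpa only [hsl, Set.mem_preimage, this] using hS hr1 hr2 ha hb hab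
  have slbddA : ∀ (S : Set (ℝ × (Fin n → ℝ))), IsCompact S → ∀ h, BddAbove (sl S h) := by
    intro S hS h
    refine BddAbove.mono (fun r hr => ⟨(r, h), hr, rfl⟩ :
      sl S h ⊆ Prod.fst '' S) ?_
    exact (hS.image continuous_fst).bddAbove
  have slbddB : ∀ (S : Set (ℝ × (Fin n → ℝ))), IsCompact S → ∀ h, BddBelow (sl S h) := by
    intro S hS h
    refine BddBelow.mono (fun r hr => ⟨(r, h), hr, rfl⟩ :
      sl S h ⊆ Prod.fst '' S) ?_
    exact (hS.image continuous_fst).bddBelow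
  have mem_sl : ∀ {S : Set (ℝ × (Fin n → ℝ))} {hh : Fin n → ℝ} {q : ℝ × (Fin n → ℝ)},
      q ∈ S → q.2 = hh → q.1 ∈ sl S hh := by
    intro S hh q hq h2
    show (q.1, hh) ∈ S
    rw [← h2, Prod.mk.eta]
    exact hq
  -- pointwise inequality
  have key : ∀ h : Fin n → ℝ,
      volume (sl C h) ≤ ENNReal.ofReal u * volume (sl A h)
        + ENNReal.ofReal v * volume (sl B h) := by
    intro h
    rcases Set.eq_empty_or_nonempty (sl C h) with he | hne
    · simp [he]
    · obtain ⟨r₀, hr₀⟩ := hne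
      obtain ⟨qa₀, hqa₀, qb₀, hqb₀, -, ha2₀, hb2₀⟩ := H _ hr₀
      have hAne : (sl A h).Nonempty := ⟨qa₀.1, mem_sl hqa₀ ha2₀⟩
      have hBne : (sl B h).Nonempty := ⟨qb₀.1, mem_sl hqb₀ hb2₀⟩
      have hCne : (sl C h).Nonempty := ⟨r₀, hr₀⟩
      set TA := sSup (sl A h); set BA := sInf (sl A h)
      set TB := sSup (sl B h); set BB := sInf (sl B h)
      set TC := sSup (sl C h); set BC := sInf (sl C h)
      have hvolA : ENNReal.ofReal (TA - BA) ≤ volume (sl A h) := by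
        have hsub : Set.Ioo BA TA ⊆ sl A h := by
          intro r hr
          obtain ⟨a, haA, har⟩ := exists_lt_of_lt_csSup hAne hr.2
          obtain ⟨b, hbA, hbr⟩ := exists_lt_of_csInf_lt hAne hr.1
          exact (slconv A hAc h).ordConnected.out hbA haA ⟨le_of_lt hbr, le_of_lt har⟩
        calc ENNReal.ofReal (TA - BA) = volume (Set.Ioo BA TA) := (Real.volume_Ioo).symm
        _ ≤ volume (sl A h) := measure_mono hsub
      have hvolB : ENNReal.ofReal (TB - BB) ≤ volume (sl B h) := by
        have hsub : Set.Ioo BB TB ⊆ sl B h := by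
          intro r hr
          obtain ⟨a, haA, har⟩ := exists_lt_of_lt_csSup hBne hr.2
          obtain ⟨b, hbA, hbr⟩ := exists_lt_of_csInf_lt hBne hr.1
          exact (slconv B hBc h).ordConnected.out hbA haA ⟨le_of_lt hbr, le_of_lt har⟩
        calc ENNReal.ofReal (TB - BB) = volume (Set.Ioo BB TB) := (Real.volume_Ioo).symm
        _ ≤ volume (sl B h) := measure_mono hsub
      have hvolC : volume (sl C h) ≤ ENNReal.ofReal (TC - BC) := by
        rw [← Real.volume_Icc]
        exact measure_mono fun r hr =>
          ⟨csInf_le (slbddB C hC h) hr, le_csSup (slbddA C hC h) hr⟩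
      have hTC : TC ≤ u * TA + v * TB := by
        refine csSup_le hCne fun r hr => ?_
        obtain ⟨qa, hqa, qb, hqb, h1, ha2, hb2⟩ := H _ hr
        have hqa1 : qa.1 ∈ sl A h := mem_sl hqa ha2
        have hqb1 : qb.1 ∈ sl B h := mem_sl hqb hb2
        calc r = u * qa.1 + v * qb.1 := h1
        _ ≤ u * TA + v * TB := by
            gcongr
            · exact le_csSup (slbddA A hA h) hqa1
            · exact le_csSup (slbddA B hB h) hqb1
      have hBC : u * BA + v * BB ≤ BC := by
        refine le_csInf hCne fun r hr => ?_
        obtain ⟨qa, hqa, qb, hqb, h1, ha2, hb2⟩ := H _ hr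
        have hqa1 : qa.1 ∈ sl A h := mem_sl hqa ha2
        have hqb1 : qb.1 ∈ sl B h := mem_sl hqb hb2
        calc u * BA + v * BB ≤ u * qa.1 + v * qb.1 := by
              gcongr
              · exact csInf_le (slbddB A hA h) hqa1
              · exact csInf_le (slbddB B hB h) hqb1
        _ = r := h1.symm
      calc volume (sl C h) ≤ ENNReal.ofReal (TC - BC) := hvolC
      _ ≤ ENNReal.ofReal (u * (TA - BA) + v * (TB - BB)) := by
          apply ENNReal.ofReal_le_ofReal; nlinarith
      _ ≤ ENNReal.ofReal (u * (TA - BA)) + ENNReal.ofReal (v * (TB - BB)) :=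
          ENNReal.ofReal_add_le
      _ = ENNReal.ofReal u * ENNReal.ofReal (TA - BA)
            + ENNReal.ofReal v * ENNReal.ofReal (TB - BB) := by
          rw [ENNReal.ofReal_mul hu, ENNReal.ofReal_mul hv]
      _ ≤ ENNReal.ofReal u * volume (sl A h) + ENNReal.ofReal v * volume (sl B h) := by
          gcongr
  -- Fubini
  have fub : ∀ (S : Set (ℝ × (Fin n → ℝ))), MeasurableSet S →
      volume S = ∫⁻ h, volume (sl S h) := by
    intro S mS
    rw [Measure.volume_eq_prod, Measure.prod_apply_symm mS]
  rw [fub C mC, fub A mA, fub B mB,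
    ← lintegral_const_mul' _ _ ENNReal.ofReal_ne_top,
    ← lintegral_const_mul' _ _ ENNReal.ofReal_ne_top,
    ← lintegral_add_left]
  · exact lintegral_mono key
  · exact (measurable_measure_prodMk_right mA).const_mul _

lemma core_ineq (d : ℕ) (t : EuclideanSpace ℝ (Fin d)) (ht : t ≠ 0)
    (u v : ℝ) (hu : 0 ≤ u) (hv : 0 ≤ v)
    (A B C : Set (EuclideanSpace ℝ (Fin d)))
    (hA : IsCompact A) (hAc : Convex ℝ A)
    (hB : IsCompact B) (hBc : Convex ℝ B)
    (hC : IsCompact C) (hCc : Convex ℝ C)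
    (H : ∀ p ∈ C, ∃ qa ∈ A, ∃ qb ∈ B, p = u • qa + v • qb ∧
      (∃ r : ℝ, qa = p + r • t) ∧ (∃ s : ℝ, qb = p + s • t)) :
    volume C ≤ ENNReal.ofReal u * volume A + ENNReal.ofReal v * volume B := by
  -- d = n + 1
  obtain ⟨n, rfl⟩ : ∃ n, d = n + 1 := by
    refine Nat.exists_eq_succ_of_ne_zero ?_
    rintro rfl
    exact ht (Subsingleton.elim t 0)
  -- orthonormal basis with b 0 parallel to t
  have hunit : Orthonormal ℝ (({0} : Set (Fin (n + 1))).restrict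
      (fun _ : Fin (n + 1) => ‖t‖⁻¹ • t)) := by
    constructor
    · intro i
      exact norm_smul_inv_norm ht
    · intro i j hij
      exact absurd (Subtype.ext ((mem_singleton_iff.1 i.2).trans
        (mem_singleton_iff.1 j.2).symm)) hij
  obtain ⟨b, hb0⟩ := hunit.exists_orthonormalBasis_extension_of_card_eq
    (by simp) (v := fun _ => ‖t‖⁻¹ • t) (s := ({0} : Set (Fin (n + 1))))
  have hb0' : b 0 = ‖t‖⁻¹ • t := hb0 0 rfl
  have hbt : t = ‖t‖ • b 0 := by
    rw [hb0', smul_inv_smul₀ (norm_ne_zero_iff.2 ht)]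
  -- the measure-preserving map to ℝ × (Fin n → ℝ)
  set ψ : EuclideanSpace ℝ (Fin (n + 1)) ≃ᵐ ℝ × (Fin n → ℝ) :=
    b.measurableEquiv.trans ((MeasurableEquiv.toLp 2 (Fin (n + 1) → ℝ)).symm.trans
      (MeasurableEquiv.piFinSuccAbove (fun _ => ℝ) 0)) with hψ
  have hmp : MeasurePreserving ψ volume volume :=
    ((volume_preserving_piFinSuccAbove (fun _ : Fin (n + 1) => ℝ) 0).comp
      (EuclideanSpace.volume_preserving_symm_measurableEquiv_toLp (Fin (n + 1)))).comp
      b.measurePreserving_measurableEquiv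
  have hψapp : ∀ p : EuclideanSpace ℝ (Fin (n + 1)),
      ψ p = (b.repr p 0, fun j => b.repr p (Fin.succ j)) := by
    intro p
    simp only [hψ, MeasurableEquiv.trans_apply, MeasurableEquiv.piFinSuccAbove_apply,
      Fin.zero_succAbove]
    rfl
  have hadd : ∀ p q : EuclideanSpace ℝ (Fin (n + 1)), ψ (p + q) = ψ p + ψ q := by
    intro p q
    rw [hψapp, hψapp, hψapp, b.repr.map_add]
    rfl
  have hsmul : ∀ (c : ℝ) (p : EuclideanSpace ℝ (Fin (n + 1))), ψ (c • p) = c • ψ p := by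
    intro c p
    rw [hψapp, hψapp, b.repr.map_smul]
    rfl
  have hψt2 : (ψ t).2 = 0 := by
    funext j
    have hrt : b.repr t = ‖t‖ • EuclideanSpace.single 0 1 := by
      conv_lhs => rw [hbt]
      rw [b.repr.map_smul, b.repr_self]
    show (b.repr t).ofLp (Fin.succ j) = 0
    rw [hrt]
    simp [EuclideanSpace.single_apply, Fin.succ_ne_zero]
  have hcont : Continuous ψ := by
    rw [funext hψapp]
    refine Continuous.prodMk ?_ ?_
    · exact (continuous_apply (0 : Fin (n + 1))).comp ((PiLp.continuous_ofLp 2 _).comp b.repr.continuous)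
    · exact continuous_pi fun j => (continuous_apply _).comp ((PiLp.continuous_ofLp 2 _).comp b.repr.continuous)
  -- transport sets
  have himg : ∀ S : Set (EuclideanSpace ℝ (Fin (n + 1))), MeasurableSet S →
      volume (ψ '' S) = volume S := by
    intro S mS
    rw [MeasurableEquiv.image_eq_preimage_symm]
    exact (MeasurePreserving.symm ψ hmp).measure_preimage mS.nullMeasurableSet
  have hconvimg : ∀ S : Set (EuclideanSpace ℝ (Fin (n + 1))), Convex ℝ S →
      Convex ℝ (ψ '' S) := by
    rintro S hS - ⟨p, hp, rfl⟩ - ⟨q, hq, rfl⟩ a c ha hc hac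
    exact ⟨a • p + c • q, hS hp hq ha hc hac, by rw [hadd, hsmul, hsmul]⟩
  have key := slice_ineq n u v hu hv (ψ '' A) (ψ '' B) (ψ '' C)
    (hA.image hcont) (hconvimg A hAc) (hB.image hcont) (hconvimg B hBc)
    (hC.image hcont) (hconvimg C hCc) ?_
  · rwa [himg A hA.isClosed.measurableSet, himg B hB.isClosed.measurableSet,
      himg C hC.isClosed.measurableSet] at key
  · rintro - ⟨p, hp, rfl⟩
    obtain ⟨qa, hqa, qb, hqb, hcomb, ⟨r, hr⟩, ⟨s, hs⟩⟩ := H p hp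
    refine ⟨ψ qa, mem_image_of_mem _ hqa, ψ qb, mem_image_of_mem _ hqb, ?_, ?_, ?_⟩
    · have : ψ p = u • ψ qa + v • ψ qb := by rw [hcomb, hadd, hsmul, hsmul]
      rw [this]
      rfl
    · rw [hr, hadd, hsmul]
      show (ψ p).2 + r • (ψ t).2 = (ψ p).2
      rw [hψt2, smul_zero, add_zero]
    · rw [hs, hadd, hsmul]
      show (ψ p).2 + s • (ψ t).2 = (ψ p).2
      rw [hψt2, smul_zero, add_zero]

lemma isCompact_convexJoin {E : Type*} [NormedAddCommGroup E] [NormedSpace ℝ E]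
    {s t : Set E} (hs : IsCompact s) (ht : IsCompact t) :
    IsCompact (convexJoin ℝ s t) := by
  have : convexJoin ℝ s t =
      (fun p : (E × E) × ℝ => (1 - p.2) • p.1.1 + p.2 • p.1.2) ''
        ((s ×ˢ t) ×ˢ Icc (0 : ℝ) 1) := by
    ext x
    simp only [mem_convexJoin, Set.mem_image, Set.mem_prod]
    constructor
    · rintro ⟨a, ha, b, hb, hx⟩
      rw [segment_eq_image] at hx
      obtain ⟨θ, hθ, hx⟩ := hx
      exact ⟨((a, b), θ), ⟨⟨ha, hb⟩, hθ⟩, hx⟩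
    · rintro ⟨⟨⟨a, b⟩, θ⟩, ⟨⟨ha, hb⟩, hθ⟩, hx⟩
      exact ⟨a, ha, b, hb, by rw [segment_eq_image]; exact ⟨θ, hθ, hx⟩⟩
  rw [this]
  refine IsCompact.image ((hs.prod ht).prod isCompact_Icc) ?_
  fun_prop

/-- Fáry–Rédei; Rogers–Shephard; Ahn–Brass–Shin: if a convex body `K'` moves on a line with
constant velocity `t`, the volume of the convex hull of its union with a fixed convex body
`K` is a convex function of the time. -/
theorem convexHull_volume_convex_of_translation (d : ℕ)
    (K K' : Set (EuclideanSpace ℝ (Fin d)))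
    (hKc : IsCompact K) (hKconv : Convex ℝ K) (hKne : K.Nonempty)
    (hK'c : IsCompact K') (hK'conv : Convex ℝ K') (hK'ne : K'.Nonempty)
    (t : EuclideanSpace ℝ (Fin d)) :
    ConvexOn ℝ Set.univ
      (fun x : ℝ => (volume (convexHull ℝ (K ∪ ((x • t) +ᵥ K')))).toReal) := by
  rcases eq_or_ne t 0 with rfl | ht
  · simp only [smul_zero]
    exact convexOn_const _ convex_univ
  refine ⟨convex_univ, fun x _ y _ u v hu hv huv => ?_⟩
  obtain rfl : v = 1 - u := by linarith
  -- notation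
  set T : ℝ → Set (EuclideanSpace ℝ (Fin d)) := fun z => (z • t) +ᵥ K' with hT
  have hTc : ∀ z, IsCompact (T z) := by
    intro z
    rw [hT]
    simp only [← Set.image_vadd]
    exact hK'c.image (by fun_prop)
  have hTconv : ∀ z, Convex ℝ (T z) := fun z => hK'conv.vadd _
  have hTne : ∀ z, (T z).Nonempty := by
    obtain ⟨k₀, hk₀⟩ := hK'ne
    exact fun z => ⟨(z • t) +ᵥ k₀, Set.vadd_mem_vadd_set hk₀⟩
  have hhull : ∀ z, convexHull ℝ (K ∪ T z) = convexJoin ℝ K (T z) := by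
    intro z
    rw [convexHull_union hKne (hTne z), hKconv.convexHull_eq, (hTconv z).convexHull_eq]
  have hCc : ∀ z, IsCompact (convexHull ℝ (K ∪ T z)) := by
    intro z
    rw [hhull z]
    exact isCompact_convexJoin hKc (hTc z)
  have hCconv : ∀ z, Convex ℝ (convexHull ℝ (K ∪ T z)) := fun z => convex_convexHull _ _
  -- the key inequality
  set X := u • x + (1 - u) • y with hX
  have key := core_ineq d t ht u (1 - u) hu hv
    (convexHull ℝ (K ∪ T x)) (convexHull ℝ (K ∪ T y)) (convexHull ℝ (K ∪ T X))
    (hCc x) (hCconv x) (hCc y) (hCconv y) (hCc X) (hCconv X) ?_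
  · have hfin : ∀ z, volume (convexHull ℝ (K ∪ T z)) ≠ ⊤ :=
      fun z => (hCc z).measure_lt_top.ne
    have := ENNReal.toReal_mono (by
      exact ENNReal.add_ne_top.2 ⟨ENNReal.mul_ne_top ENNReal.ofReal_ne_top (hfin x),
        ENNReal.mul_ne_top ENNReal.ofReal_ne_top (hfin y)⟩) key
    rw [ENNReal.toReal_add (ENNReal.mul_ne_top ENNReal.ofReal_ne_top (hfin x))
        (ENNReal.mul_ne_top ENNReal.ofReal_ne_top (hfin y)),
      ENNReal.toReal_mul, ENNReal.toReal_mul, ENNReal.toReal_ofReal hu,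
      ENNReal.toReal_ofReal hv] at this
    simpa [hX, smul_eq_mul] using this
  · -- verify the shadow hypothesis
    intro p hp
    rw [hhull X] at hp
    obtain ⟨k, hk, w, hw, hseg⟩ := mem_convexJoin.1 hp
    obtain ⟨k', hk', hwk⟩ := hw
    obtain ⟨θ, η, hθ, hη, hθη, hpval⟩ := hseg
    have hwX : w = X • t + k' := hwk.symm
    refine ⟨θ • k + η • (x • t + k'), ?_, θ • k + η • (y • t + k'), ?_, ?_, ?_, ?_⟩
    · rw [hhull x]
      exact mem_convexJoin.2 ⟨k, hk, x • t + k', ⟨k', hk', rfl⟩, θ, η, hθ, hη, hθη, rfl⟩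
    · rw [hhull y]
      exact mem_convexJoin.2 ⟨k, hk, y • t + k', ⟨k', hk', rfl⟩, θ, η, hθ, hη, hθη, rfl⟩
    · rw [← hpval, hwX, hX]
      match_scalars
      all_goals try simp only [smul_eq_mul]
      all_goals ring
    · refine ⟨η * (x - X), ?_⟩
      rw [← hpval, hwX]
      match_scalars
      all_goals try simp only [smul_eq_mul]
      all_goals ring
    · refine ⟨η * (y - X), ?_⟩
      rw [← hpval, hwX]
      match_scalars
      all_goals try simp only [smul_eq_mul]
      all_goals ring
end

section
/- Let K and K' be nonempty compact convex sets in EuclideanSpace ℝ (Fin d) and let u and v be fixed vectors. Then the function g : ℝ → ℝ defined by g(x) = vol(convexHull ℝ (((x • u) +ᵥ K) ∪ ((x • v) +ᵥ K'))) is convex on ℝ. (If two convex bodies move uniformly on two straight lines, the volume of their convex hull is a convex function of time.) -/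
open MeasureTheory Pointwise Set

private lemma mem_hull_union_iff' {E : Type*} [AddCommGroup E] [Module ℝ E]
    {A B : Set E} (hA : Convex ℝ A) (hB : Convex ℝ B) (hAne : A.Nonempty) (hBne : B.Nonempty)
    {z : E} :
    z ∈ convexHull ℝ (A ∪ B) ↔
      ∃ p ∈ A, ∃ q ∈ B, ∃ θ ∈ Icc (0:ℝ) 1, z = (1 - θ) • p + θ • q := by
  rw [hA.convexHull_union hB hAne hBne, mem_convexJoin]
  constructor
  · rintro ⟨p, hp, q, hq, hz⟩
    rw [segment_eq_image] at hz
    obtain ⟨θ, hθ, hz⟩ := hz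
    exact ⟨p, hp, q, hq, θ, hθ, hz.symm⟩
  · rintro ⟨p, hp, q, hq, θ, hθ, rfl⟩
    refine ⟨p, hp, q, hq, ?_⟩
    rw [segment_eq_image]
    exact ⟨θ, hθ, rfl⟩

private lemma isCompact_convexJoin' {E : Type*} [NormedAddCommGroup E] [NormedSpace ℝ E]
    {A B : Set E} (hA : IsCompact A) (hB : IsCompact B) :
    IsCompact (convexJoin ℝ A B) := by
  have h : convexJoin ℝ A B =
      (fun p : (E × E) × ℝ => (1 - p.2) • p.1.1 + p.2 • p.1.2) '' ((A ×ˢ B) ×ˢ Icc (0:ℝ) 1) := by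
    ext z
    rw [mem_convexJoin]
    constructor
    · rintro ⟨p, hp, q, hq, hz⟩
      rw [segment_eq_image] at hz
      obtain ⟨θ, hθ, hz⟩ := hz
      exact ⟨((p, q), θ), ⟨⟨hp, hq⟩, hθ⟩, hz⟩
    · rintro ⟨⟨⟨p, q⟩, θ⟩, ⟨⟨hp, hq⟩, hθ⟩, hz⟩
      refine ⟨p, hp, q, hq, ?_⟩
      rw [segment_eq_image]
      exact ⟨θ, hθ, hz⟩
  rw [h]
  refine (((hA.prod hB).prod isCompact_Icc).image ?_)
  exact ((continuous_const.sub continuous_snd).smul (continuous_fst.fst)).add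
    (continuous_snd.smul continuous_fst.snd)

private lemma isCompact_vadd' {E : Type*} [NormedAddCommGroup E]
    {B : Set E} (hB : IsCompact B) (c : E) : IsCompact (c +ᵥ B) := by
  rw [← Set.image_vadd]
  exact hB.image (continuous_const.add continuous_id)

private lemma aux_convexOn (n : ℕ) (A B : Set (ℝ × (Fin n → ℝ)))
    (hAc : IsCompact A) (hAconv : Convex ℝ A) (hAne : A.Nonempty)
    (hBc : IsCompact B) (hBconv : Convex ℝ B) (hBne : B.Nonempty) :
    ConvexOn ℝ Set.univ (fun t : ℝ =>
      (volume (convexHull ℝ (A ∪ (((t : ℝ), (0 : Fin n → ℝ)) +ᵥ B)))).toReal) := by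
  set C : ℝ → Set (ℝ × (Fin n → ℝ)) :=
    fun t => convexHull ℝ (A ∪ (((t : ℝ), (0 : Fin n → ℝ)) +ᵥ B)) with hCdef
  have hBconv' : ∀ t : ℝ, Convex ℝ (((t, (0 : Fin n → ℝ))) +ᵥ B) := fun t => hBconv.vadd _
  have hBne' : ∀ t : ℝ, (((t, (0 : Fin n → ℝ))) +ᵥ B).Nonempty := by
    intro t
    obtain ⟨q, hq⟩ := hBne
    exact ⟨_, Set.vadd_mem_vadd_set hq⟩
  have hCc : ∀ t, IsCompact (C t) := by
    intro t
    rw [hCdef]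
    simp only
    rw [hAconv.convexHull_union (hBconv' t) hAne (hBne' t)]
    exact isCompact_convexJoin' hAc (isCompact_vadd' hBc _)
  have hCconv : ∀ t, Convex ℝ (C t) := fun t => convex_convexHull ℝ _
  have hmem : ∀ (t : ℝ) (z : ℝ × (Fin n → ℝ)), z ∈ C t ↔
      ∃ p ∈ A, ∃ q ∈ B, ∃ θ ∈ Icc (0:ℝ) 1,
        z = (1 - θ) • p + θ • (((t : ℝ), (0 : Fin n → ℝ)) + q) := by
    intro t z
    rw [hCdef]
    simp only
    rw [mem_hull_union_iff' hAconv (hBconv' t) hAne (hBne' t)]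
    constructor
    · rintro ⟨p, hp, q', hq', θ, hθ, rfl⟩
      obtain ⟨q, hq, rfl⟩ := hq'
      exact ⟨p, hp, q, hq, θ, hθ, rfl⟩
    · rintro ⟨p, hp, q, hq, θ, hθ, rfl⟩
      exact ⟨p, hp, _, Set.vadd_mem_vadd_set hq, θ, hθ, rfl⟩
  -- sections
  set sec : ℝ → (Fin n → ℝ) → Set ℝ := fun t y => (fun r : ℝ => (r, y)) ⁻¹' (C t) with hsecdef
  have hsecFub : ∀ t, volume (C t) = ∫⁻ y, volume (sec t y) := by
    intro t
    rw [Measure.volume_eq_prod, Measure.prod_apply_symm (hCc t).measurableSet]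
  have hshift : ∀ (t : ℝ) (y : Fin n → ℝ) (r : ℝ), r ∈ sec t y →
      ∃ θ ∈ Icc (0:ℝ) 1, ∀ t' : ℝ, r + θ * (t' - t) ∈ sec t' y := by
    intro t y r hr
    obtain ⟨p, hp, q, hq, θ, hθ, hz⟩ := (hmem t (r, y)).1 hr
    obtain ⟨p1, p2⟩ := p
    obtain ⟨q1, q2⟩ := q
    rw [Prod.ext_iff] at hz
    simp only [Prod.smul_mk, Prod.mk_add_mk, Prod.fst_add, Prod.snd_add, smul_eq_mul] at hz
    obtain ⟨hz1, hz2⟩ := hz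
    refine ⟨θ, hθ, fun t' => ?_⟩
    refine (hmem t' (r + θ * (t' - t), y)).2 ⟨(p1, p2), hp, (q1, q2), hq, θ, hθ, ?_⟩
    simp only [Prod.smul_mk, Prod.mk_add_mk, Prod.mk.injEq, smul_eq_mul]
    constructor
    · rw [hz1]; ring
    · exact hz2
  have hsecconv : ∀ t y, Convex ℝ (sec t y) := by
    intro t y r₁ hr₁ r₂ hr₂ c e hc he hce
    have h1 : c • ((r₁, y) : ℝ × (Fin n → ℝ)) + e • (r₂, y) = ((c • r₁ + e • r₂ : ℝ), y) := by
      rw [Prod.smul_mk, Prod.smul_mk, Prod.mk_add_mk, Convex.combo_self hce]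
    have := (hCconv t) hr₁ hr₂ hc he hce
    show ((c • r₁ + e • r₂ : ℝ), y) ∈ C t
    rw [← h1]
    exact this
  have hseccompact : ∀ t y, IsCompact (sec t y) := by
    intro t y
    have hcl : IsClosed (sec t y) :=
      ((hCc t).isClosed).preimage (continuous_id.prodMk continuous_const)
    refine IsCompact.of_isClosed_subset ((hCc t).image continuous_fst) hcl ?_
    intro r hr
    exact ⟨(r, y), hr, rfl⟩
  have hsecne : ∀ (t t' : ℝ) (y : Fin n → ℝ), (sec t y).Nonempty → (sec t' y).Nonempty := by
    rintro t t' y ⟨r, hr⟩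
    obtain ⟨θ, hθ, h⟩ := hshift t y r hr
    exact ⟨_, h t'⟩
  have hIcc : ∀ (t : ℝ) (y : Fin n → ℝ), (sec t y).Nonempty →
      sec t y = Icc (sInf (sec t y)) (sSup (sec t y)) := fun t y hne =>
    eq_Icc_of_connected_compact ⟨hne, (hsecconv t y).isPreconnected⟩ (hseccompact t y)
  -- main ENNReal inequality
  have hmain : ∀ (t₀ t₁ a b : ℝ), 0 ≤ a → 0 ≤ b → a + b = 1 →
      volume (C (a * t₀ + b * t₁)) ≤
        ENNReal.ofReal a * volume (C t₀) + ENNReal.ofReal b * volume (C t₁) := by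
    intro t₀ t₁ a b ha hb hab
    set t : ℝ := a * t₀ + b * t₁ with htdef
    have key : ∀ y : Fin n → ℝ, volume (sec t y) ≤
        ENNReal.ofReal a * volume (sec t₀ y) + ENNReal.ofReal b * volume (sec t₁ y) := by
      intro y
      rcases Set.eq_empty_or_nonempty (sec t y) with he | hne
      · simp [he]
      have hne₀ := hsecne t t₀ y hne
      have hne₁ := hsecne t t₁ y hne
      set I := sInf (sec t y)
      set S := sSup (sec t y)
      set I₀ := sInf (sec t₀ y)
      set S₀ := sSup (sec t₀ y)
      set I₁ := sInf (sec t₁ y)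
      set S₁ := sSup (sec t₁ y)
      have hIS : I ≤ S := by
        have := hne
        rw [hIcc t y hne] at this
        exact Set.nonempty_Icc.1 this
      have hIS₀ : I₀ ≤ S₀ := by
        have := hne₀
        rw [hIcc t₀ y hne₀] at this
        exact Set.nonempty_Icc.1 this
      have hIS₁ : I₁ ≤ S₁ := by
        have := hne₁
        rw [hIcc t₁ y hne₁] at this
        exact Set.nonempty_Icc.1 this
      have hSmem : S ∈ sec t y := by
        rw [hIcc t y hne]; exact Set.right_mem_Icc.2 hIS
      have hImem : I ∈ sec t y := by
        rw [hIcc t y hne]; exact Set.left_mem_Icc.2 hIS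
      obtain ⟨θS, hθS, hStr⟩ := hshift t y S hSmem
      obtain ⟨θI, hθI, hItr⟩ := hshift t y I hImem
      have hS0 : S + θS * (t₀ - t) ≤ S₀ := le_csSup (hseccompact t₀ y).bddAbove (hStr t₀)
      have hS1 : S + θS * (t₁ - t) ≤ S₁ := le_csSup (hseccompact t₁ y).bddAbove (hStr t₁)
      have hI0 : I₀ ≤ I + θI * (t₀ - t) := csInf_le (hseccompact t₀ y).bddBelow (hItr t₀)
      have hI1 : I₁ ≤ I + θI * (t₁ - t) := csInf_le (hseccompact t₁ y).bddBelow (hItr t₁)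
      have e1S : a * (t₀ - t) + b * (t₁ - t) = 0 := by
        have h' : a * (t₀ - t) + b * (t₁ - t) = a * t₀ + b * t₁ - (a + b) * t := by ring
        rw [h', hab, one_mul, htdef, sub_self]
      have hSle : S ≤ a * S₀ + b * S₁ := by
        have m0 : a * (S + θS * (t₀ - t)) ≤ a * S₀ := mul_le_mul_of_nonneg_left hS0 ha
        have m1 : b * (S + θS * (t₁ - t)) ≤ b * S₁ := mul_le_mul_of_nonneg_left hS1 hb
        have expand : a * (S + θS * (t₀ - t)) + b * (S + θS * (t₁ - t)) =
            (a + b) * S + θS * (a * (t₀ - t) + b * (t₁ - t)) := by ring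
        rw [hab, e1S, one_mul, mul_zero, add_zero] at expand
        linarith
      have hIle : a * I₀ + b * I₁ ≤ I := by
        have m0 : a * I₀ ≤ a * (I + θI * (t₀ - t)) := mul_le_mul_of_nonneg_left hI0 ha
        have m1 : b * I₁ ≤ b * (I + θI * (t₁ - t)) := mul_le_mul_of_nonneg_left hI1 hb
        have expand : a * (I + θI * (t₀ - t)) + b * (I + θI * (t₁ - t)) =
            (a + b) * I + θI * (a * (t₀ - t) + b * (t₁ - t)) := by ring
        rw [hab, e1S, one_mul, mul_zero, add_zero] at expand
        linarith
      have hlen : S - I ≤ a * (S₀ - I₀) + b * (S₁ - I₁) := by nlinarith [hSle, hIle]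
      rw [hIcc t y hne, hIcc t₀ y hne₀, hIcc t₁ y hne₁, Real.volume_Icc, Real.volume_Icc,
        Real.volume_Icc]
      calc ENNReal.ofReal (S - I)
          ≤ ENNReal.ofReal (a * (S₀ - I₀) + b * (S₁ - I₁)) := ENNReal.ofReal_le_ofReal hlen
        _ = ENNReal.ofReal (a * (S₀ - I₀)) + ENNReal.ofReal (b * (S₁ - I₁)) :=
            ENNReal.ofReal_add (mul_nonneg ha (by linarith)) (mul_nonneg hb (by linarith))
        _ = ENNReal.ofReal a * ENNReal.ofReal (S₀ - I₀) +
            ENNReal.ofReal b * ENNReal.ofReal (S₁ - I₁) := by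
            rw [ENNReal.ofReal_mul ha, ENNReal.ofReal_mul hb]
    have hmeas₀ : Measurable fun y : Fin n → ℝ => volume (sec t₀ y) :=
      measurable_measure_prodMk_right (hCc t₀).measurableSet
    have hmeas₁ : Measurable fun y : Fin n → ℝ => volume (sec t₁ y) :=
      measurable_measure_prodMk_right (hCc t₁).measurableSet
    calc volume (C t) = ∫⁻ y, volume (sec t y) := hsecFub t
      _ ≤ ∫⁻ y, (ENNReal.ofReal a * volume (sec t₀ y) + ENNReal.ofReal b * volume (sec t₁ y)) :=
          lintegral_mono key
      _ = ENNReal.ofReal a * volume (C t₀) + ENNReal.ofReal b * volume (C t₁) := by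
          rw [lintegral_add_left (hmeas₀.const_mul _), lintegral_const_mul _ hmeas₀,
            lintegral_const_mul _ hmeas₁, ← hsecFub t₀, ← hsecFub t₁]
  -- conclude
  refine ⟨convex_univ, fun t₀ _ t₁ _ a b ha hb hab => ?_⟩
  simp only [smul_eq_mul]
  have hfin₀ : volume (C t₀) ≠ ⊤ := (hCc t₀).measure_lt_top.ne
  have hfin₁ : volume (C t₁) ≠ ⊤ := (hCc t₁).measure_lt_top.ne
  have h := hmain t₀ t₁ a b ha hb hab
  have hRHSfin : ENNReal.ofReal a * volume (C t₀) + ENNReal.ofReal b * volume (C t₁) ≠ ⊤ := by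
    exact ENNReal.add_ne_top.2 ⟨ENNReal.mul_ne_top ENNReal.ofReal_ne_top hfin₀,
      ENNReal.mul_ne_top ENNReal.ofReal_ne_top hfin₁⟩
  have h2 := ENNReal.toReal_mono hRHSfin h
  rw [ENNReal.toReal_add (ENNReal.mul_ne_top ENNReal.ofReal_ne_top hfin₀)
    (ENNReal.mul_ne_top ENNReal.ofReal_ne_top hfin₁), ENNReal.toReal_mul, ENNReal.toReal_mul,
    ENNReal.toReal_ofReal ha, ENNReal.toReal_ofReal hb] at h2
  exact h2

/-- If two convex bodies move uniformly on two straight lines, then the volume of their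
convex hull is a convex function of the time. -/
theorem convexHull_volume_convex_of_two_translations (d : ℕ)
    (K K' : Set (EuclideanSpace ℝ (Fin d)))
    (hKc : IsCompact K) (hKconv : Convex ℝ K) (hKne : K.Nonempty)
    (hK'c : IsCompact K') (hK'conv : Convex ℝ K') (hK'ne : K'.Nonempty)
    (u v : EuclideanSpace ℝ (Fin d)) :
    ConvexOn ℝ Set.univ
      (fun x : ℝ => (volume (convexHull ℝ (((x • u) +ᵥ K) ∪ ((x • v) +ᵥ K')))).toReal) := by
  classical
  set w : EuclideanSpace ℝ (Fin d) := v - u with hwdef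
  have hred : ∀ x : ℝ, volume (convexHull ℝ (((x • u) +ᵥ K) ∪ ((x • v) +ᵥ K'))) =
      volume (convexHull ℝ (K ∪ ((x • w) +ᵥ K'))) := by
    intro x
    have h1 : (x • v) +ᵥ K' = (x • u) +ᵥ ((x • w) +ᵥ K') := by
      rw [vadd_vadd]
      congr 1
      rw [hwdef, ← smul_add]
      congr 1
      abel
    rw [h1, ← Set.vadd_set_union, convexHull_vadd, measure_vadd]
  have hgoal_eq : (fun x : ℝ =>
      (volume (convexHull ℝ (((x • u) +ᵥ K) ∪ ((x • v) +ᵥ K')))).toReal) =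
      fun x : ℝ => (volume (convexHull ℝ (K ∪ ((x • w) +ᵥ K')))).toReal := by
    funext x
    rw [hred]
  rw [hgoal_eq]
  rcases eq_or_ne w 0 with hw | hw
  · have : (fun x : ℝ => (volume (convexHull ℝ (K ∪ ((x • w) +ᵥ K')))).toReal) =
        fun _ : ℝ => (volume (convexHull ℝ (K ∪ K'))).toReal := by
      funext x
      rw [hw, smul_zero, zero_vadd]
    rw [this]
    exact convexOn_const _ convex_univ
  · cases d with
    | zero =>
      exact absurd (by ext i; exact i.elim0 : w = 0) hw
    | succ n =>
      set e₀ : EuclideanSpace ℝ (Fin (n + 1)) := EuclideanSpace.single 0 1 with he₀def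
      have he₀ : ‖e₀‖ = 1 := by
        rw [he₀def, EuclideanSpace.norm_single, norm_one]
      have hnorm : ‖w‖ = ‖‖w‖ • e₀‖ := by
        rw [norm_smul, he₀, mul_one, Real.norm_of_nonneg (norm_nonneg w)]
      set f := Submodule.reflection (ℝ ∙ (w - ‖w‖ • e₀))ᗮ with hfdef
      have hfw : f w = ‖w‖ • e₀ := Submodule.reflection_sub hnorm
      set Ψ : EuclideanSpace ℝ (Fin (n + 1)) → ℝ × (Fin n → ℝ) :=
        fun z => ((f z) 0, Fin.removeNth 0 (f z)) with hΨdef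
      have hΨcomp : Ψ = (MeasurableEquiv.piFinSuccAbove (fun _ : Fin (n + 1) => ℝ) 0) ∘
          (MeasurableEquiv.toLp 2 (Fin (n + 1) → ℝ)).symm ∘ f := rfl
      have hΨmp : MeasurePreserving Ψ volume volume := by
        rw [hΨcomp]
        exact ((volume_preserving_piFinSuccAbove (fun _ : Fin (n + 1) => ℝ) 0).comp
          (EuclideanSpace.volume_preserving_symm_measurableEquiv_toLp (Fin (n + 1)))).comp
          (f : EuclideanSpace ℝ (Fin (n + 1)) ≃ₗᵢ[ℝ] _).measurePreserving
      have hΨinj : Function.Injective Ψ := by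
        rw [hΨcomp]
        exact ((MeasurableEquiv.piFinSuccAbove (fun _ : Fin (n + 1) => ℝ) 0).injective.comp
          (MeasurableEquiv.toLp 2 (Fin (n + 1) → ℝ)).symm.injective).comp f.injective
      have hΨcont : Continuous Ψ := by
        refine Continuous.prodMk ?_ ?_
        · exact (continuous_apply (0 : Fin (n + 1))).comp ((PiLp.continuous_ofLp _ _).comp f.continuous)
        · exact continuous_pi fun j =>
            (continuous_apply ((0 : Fin (n + 1)).succAbove j)).comp
              ((PiLp.continuous_ofLp _ _).comp f.continuous)
      have hΨlin : IsLinearMap ℝ Ψ := by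
        constructor
        · intro x y
          rw [hΨdef]
          simp only [map_add]
          rfl
        · intro c x
          rw [hΨdef]
          simp only [_root_.map_smul]
          rfl
      have hΨw : Ψ w = (‖w‖, 0) := by
        rw [hΨdef]
        simp only [hfw]
        refine Prod.ext ?_ ?_
        · simp [he₀def, EuclideanSpace.single_apply]
        · funext j
          show (‖w‖ • e₀) ((0 : Fin (n + 1)).succAbove j) = 0
          rw [he₀def, Fin.zero_succAbove, PiLp.smul_apply, EuclideanSpace.single_apply,
            if_neg (Fin.succ_ne_zero j), smul_zero]
      have hvolimg : ∀ U : Set (EuclideanSpace ℝ (Fin (n + 1))), IsCompact U →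
          volume (Ψ '' U) = volume U := by
        intro U hU
        have h1 := hΨmp.measure_preimage (hU.image hΨcont).measurableSet.nullMeasurableSet
        rw [Set.preimage_image_eq _ hΨinj] at h1
        exact h1.symm
      have hvaddimg : ∀ (c : EuclideanSpace ℝ (Fin (n + 1)))
          (S : Set (EuclideanSpace ℝ (Fin (n + 1)))), Ψ '' (c +ᵥ S) = Ψ c +ᵥ Ψ '' S := by
        intro c S
        rw [← Set.image_vadd, ← Set.image_vadd, Set.image_image, Set.image_image]
        apply Set.image_congr
        intro s _
        exact hΨlin.map_add c s
      have hhull : ∀ x : ℝ, Ψ '' (convexHull ℝ (K ∪ ((x • w) +ᵥ K'))) =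
          convexHull ℝ ((Ψ '' K) ∪ (((x * ‖w‖ : ℝ), (0 : Fin n → ℝ)) +ᵥ (Ψ '' K'))) := by
        intro x
        rw [hΨlin.image_convexHull, Set.image_union, hvaddimg]
        congr 2
        rw [hΨlin.map_smul, hΨw, Prod.smul_mk, smul_eq_mul, smul_zero]
      have hKcompact' : ∀ x : ℝ, IsCompact (convexHull ℝ (K ∪ ((x • w) +ᵥ K'))) := by
        intro x
        rw [hKconv.convexHull_union (hK'conv.vadd _) hKne
          ⟨_, Set.vadd_mem_vadd_set hK'ne.some_mem⟩]
        exact isCompact_convexJoin' hKc (isCompact_vadd' hK'c _)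
      have haux := aux_convexOn n (Ψ '' K) (Ψ '' K') (hKc.image hΨcont)
        (hKconv.is_linear_image hΨlin) (hKne.image Ψ) (hK'c.image hΨcont)
        (hK'conv.is_linear_image hΨlin) (hK'ne.image Ψ)
      have hfinal : (fun x : ℝ => (volume (convexHull ℝ (K ∪ ((x • w) +ᵥ K')))).toReal) =
          (fun t : ℝ => (volume (convexHull ℝ ((Ψ '' K) ∪
            (((t : ℝ), (0 : Fin n → ℝ)) +ᵥ (Ψ '' K'))))).toReal) ∘
          (fun x : ℝ => x * ‖w‖) := by
        funext x
        simp only [Function.comp_apply]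
        rw [← hhull, hvolimg _ (hKcompact' x)]
      rw [hfinal]
      have hlin : ConvexOn ℝ ((fun x : ℝ => x * ‖w‖) ⁻¹' Set.univ)
          ((fun t : ℝ => (volume (convexHull ℝ ((Ψ '' K) ∪
            (((t : ℝ), (0 : Fin n → ℝ)) +ᵥ (Ψ '' K'))))).toReal) ∘ (fun x : ℝ => x * ‖w‖)) := by
        have hco : ⇑(AffineMap.lineMap (0 : ℝ) ‖w‖) = fun x : ℝ => x * ‖w‖ := by
          funext x
          simp [AffineMap.lineMap_apply, smul_eq_mul]
        have h := haux.comp_affineMap (AffineMap.lineMap (0 : ℝ) ‖w‖)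
        rwa [hco] at h
      simpa using hlin
end

section
/- (Rogers–Shephard, linear parameter systems) Let I be a nonempty index set, let a : I → EuclideanSpace ℝ (Fin d) and λ : I → ℝ be functions with bounded ranges, and let e be a fixed vector in EuclideanSpace ℝ (Fin d). For t ∈ ℝ let C(t) = convexHull ℝ {a(i) + (t·λ(i)) • e : i ∈ I}. Then the function t ↦ vol(C(t)) is convex on ℝ. -/
open MeasureTheory Bornology Set

private lemma compact_convex_eq_Icc {s : Set ℝ} (hc : IsCompact s) (hconv : Convex ℝ s)
    (hne : s.Nonempty) : s = Set.Icc (sInf s) (sSup s) :=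
  Subset.antisymm (fun x hx => ⟨csInf_le hc.bddBelow hx, le_csSup hc.bddAbove hx⟩)
    (hconv.ordConnected.out (hc.sInf_mem hne) (hc.sSup_mem hne))

private noncomputable def evalLin (t : ℝ) : (ℝ × ℝ) →ₗ[ℝ] ℝ :=
  LinearMap.fst ℝ ℝ ℝ + t • LinearMap.snd ℝ ℝ ℝ

private lemma evalLin_apply (t : ℝ) (q : ℝ × ℝ) : evalLin t q = q.1 + t * q.2 := rfl

private lemma slice_vol_convex {A : Set (ℝ × ℝ)} (hAc : IsCompact A) (hAconv : Convex ℝ A)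
    {t0 t1 θa θb : ℝ} (ha : 0 ≤ θa) (hb : 0 ≤ θb) (hab : θa + θb = 1) :
    volume (evalLin (θa * t0 + θb * t1) '' A)
      ≤ ENNReal.ofReal θa * volume (evalLin t0 '' A)
        + ENNReal.ofReal θb * volume (evalLin t1 '' A) := by
  rcases A.eq_empty_or_nonempty with rfl | hne
  · simp
  have himc : ∀ t : ℝ, IsCompact (evalLin t '' A) :=
    fun t => hAc.image (evalLin t).continuous_of_finiteDimensional
  have himconv : ∀ t : ℝ, Convex ℝ (evalLin t '' A) := fun t => hAconv.linear_image _
  have hvol : ∀ t : ℝ, volume (evalLin t '' A)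
      = ENNReal.ofReal (sSup (evalLin t '' A) - sInf (evalLin t '' A)) := by
    intro t
    conv_lhs => rw [compact_convex_eq_Icc (himc t) (himconv t) (hne.image _)]
    rw [Real.volume_Icc]
  set t := θa * t0 + θb * t1 with hT
  have hSup : sSup (evalLin t '' A) ≤ θa * sSup (evalLin t0 '' A) + θb * sSup (evalLin t1 '' A) := by
    apply csSup_le (hne.image _)
    rintro r ⟨q, hq, rfl⟩
    have h0 : evalLin t0 q ≤ sSup (evalLin t0 '' A) := le_csSup (himc t0).bddAbove ⟨q, hq, rfl⟩
    have h1 : evalLin t1 q ≤ sSup (evalLin t1 '' A) := le_csSup (himc t1).bddAbove ⟨q, hq, rfl⟩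
    have hq' : evalLin t q = θa * evalLin t0 q + θb * evalLin t1 q := by
      simp only [evalLin_apply, hT]; linear_combination (-q.1) * hab
    rw [hq']
    exact add_le_add (mul_le_mul_of_nonneg_left h0 ha) (mul_le_mul_of_nonneg_left h1 hb)
  have hInf : θa * sInf (evalLin t0 '' A) + θb * sInf (evalLin t1 '' A) ≤ sInf (evalLin t '' A) := by
    apply le_csInf (hne.image _)
    rintro r ⟨q, hq, rfl⟩
    have h0 : sInf (evalLin t0 '' A) ≤ evalLin t0 q := csInf_le (himc t0).bddBelow ⟨q, hq, rfl⟩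
    have h1 : sInf (evalLin t1 '' A) ≤ evalLin t1 q := csInf_le (himc t1).bddBelow ⟨q, hq, rfl⟩
    have hq' : evalLin t q = θa * evalLin t0 q + θb * evalLin t1 q := by
      simp only [evalLin_apply, hT]; linear_combination (-q.1) * hab
    rw [hq']
    exact add_le_add (mul_le_mul_of_nonneg_left h0 ha) (mul_le_mul_of_nonneg_left h1 hb)
  have hle : ∀ s : ℝ, sInf (evalLin s '' A) ≤ sSup (evalLin s '' A) := fun s =>
    Real.sInf_le_sSup _ (himc s).bddBelow (himc s).bddAbove
  calc volume (evalLin t '' A)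
      = ENNReal.ofReal (sSup (evalLin t '' A) - sInf (evalLin t '' A)) := hvol t
    _ ≤ ENNReal.ofReal (θa * (sSup (evalLin t0 '' A) - sInf (evalLin t0 '' A))
          + θb * (sSup (evalLin t1 '' A) - sInf (evalLin t1 '' A))) := by
        apply ENNReal.ofReal_le_ofReal; nlinarith [hSup, hInf]
    _ = ENNReal.ofReal (θa * (sSup (evalLin t0 '' A) - sInf (evalLin t0 '' A)))
          + ENNReal.ofReal (θb * (sSup (evalLin t1 '' A) - sInf (evalLin t1 '' A))) :=
        ENNReal.ofReal_add (mul_nonneg ha (by linarith [hle t0])) (mul_nonneg hb (by linarith [hle t1]))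
    _ = ENNReal.ofReal θa * volume (evalLin t0 '' A)
          + ENNReal.ofReal θb * volume (evalLin t1 '' A) := by
        rw [ENNReal.ofReal_mul ha, ENNReal.ofReal_mul hb, hvol t0, hvol t1]

private noncomputable def shearMap (n : ℕ) (t : ℝ) :
    ((Fin n → ℝ) × ℝ × ℝ) →ₗ[ℝ] (Fin n → ℝ) × ℝ :=
  (LinearMap.fst ℝ (Fin n → ℝ) (ℝ × ℝ)).prod
    ((evalLin t).comp (LinearMap.snd ℝ (Fin n → ℝ) (ℝ × ℝ)))

private lemma shearMap_apply (n : ℕ) (t : ℝ) (p : (Fin n → ℝ) × ℝ × ℝ) :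
    shearMap n t p = (p.1, p.2.1 + t * p.2.2) := rfl


private theorem core (n : ℕ) {I : Type*} [Nonempty I]
    (v : I → Fin n → ℝ) (c : I → ℝ) (lam : I → ℝ)
    (hb : IsBounded (range fun i => ((v i, c i, lam i) : (Fin n → ℝ) × ℝ × ℝ))) :
    ConvexOn ℝ univ (fun t : ℝ =>
      (volume (convexHull ℝ
        (range fun i => ((v i, c i + t * lam i) : (Fin n → ℝ) × ℝ)))).toReal) := by
  classical
  haveI hHaar : (volume : Measure ((Fin n → ℝ) × ℝ)).IsAddHaarMeasure := by
    rw [Measure.volume_eq_prod]; infer_instance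
  set pts : I → (Fin n → ℝ) × ℝ × ℝ := fun i => (v i, c i, lam i) with hpts
  set K : Set ((Fin n → ℝ) × ℝ × ℝ) := closure (convexHull ℝ (range pts)) with hK
  have hKconv : Convex ℝ K := (convex_convexHull ℝ _).closure
  have hKb : IsBounded K := (isBounded_convexHull.mpr hb).closure
  have hKc : IsCompact K := Metric.isCompact_of_isClosed_isBounded isClosed_closure hKb
  have hcont : ∀ t : ℝ, Continuous (shearMap n t) :=
    fun t => (shearMap n t).continuous_of_finiteDimensional
  have hSc : ∀ t : ℝ, IsCompact (shearMap n t '' K) := fun t => hKc.image (hcont t)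
  have hSmeas : ∀ t : ℝ, MeasurableSet (shearMap n t '' K) :=
    fun t => (hSc t).isClosed.measurableSet
  have himg : ∀ t : ℝ, shearMap n t '' (convexHull ℝ (range pts))
      = convexHull ℝ (range fun i => ((v i, c i + t * lam i) : (Fin n → ℝ) × ℝ)) := by
    intro t
    rw [(shearMap n t).image_convexHull, ← Set.range_comp]
    rfl
  have hvolC : ∀ t : ℝ,
      volume (convexHull ℝ (range fun i => ((v i, c i + t * lam i) : (Fin n → ℝ) × ℝ)))
        = volume (shearMap n t '' K) := by
    intro t
    have h1 : shearMap n t '' K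
        = closure (shearMap n t '' (convexHull ℝ (range pts))) := by
      refine Subset.antisymm ?_ (closure_minimal (image_mono subset_closure)
        (hSc t).isClosed)
      rw [hK]
      exact image_closure_subset_closure_image (hcont t)
    rw [h1, himg t]
    set Ct : Set ((Fin n → ℝ) × ℝ) :=
      convexHull ℝ (range fun i => ((v i, c i + t * lam i) : (Fin n → ℝ) × ℝ)) with hCt
    have hfr : volume (frontier Ct) = 0 := (convex_convexHull ℝ _).addHaar_frontier volume
    refine le_antisymm (measure_mono subset_closure) ?_
    calc volume (closure Ct) = volume (Ct ∪ frontier Ct) := by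
          rw [closure_eq_self_union_frontier]
      _ ≤ volume Ct + volume (frontier Ct) := measure_union_le _ _
      _ = volume Ct := by rw [hfr, add_zero]
  have hfib : ∀ (t : ℝ) (y : Fin n → ℝ),
      Prod.mk y ⁻¹' (shearMap n t '' K) = evalLin t '' {q : ℝ × ℝ | (y, q) ∈ K} := by
    intro t y
    ext r
    simp only [mem_preimage, mem_image, mem_setOf_eq]
    constructor
    · rintro ⟨p, hp, hpe⟩
      rw [shearMap_apply] at hpe
      simp only [Prod.mk.injEq] at hpe
      refine ⟨p.2, ?_, ?_⟩
      · rw [← hpe.1, Prod.mk.eta]; exact hp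
      · rw [evalLin_apply]; exact hpe.2
    · rintro ⟨q, hq, hqr⟩
      refine ⟨(y, q), hq, ?_⟩
      rw [shearMap_apply]
      rw [evalLin_apply] at hqr
      exact Prod.ext_iff.mpr ⟨rfl, hqr⟩
  have hAc : ∀ y : Fin n → ℝ, IsCompact {q : ℝ × ℝ | (y, q) ∈ K} := by
    intro y
    have hcl : IsClosed {q : ℝ × ℝ | (y, q) ∈ K} :=
      IsClosed.preimage (Continuous.prodMk_right y) hKc.isClosed
    exact (hKc.image continuous_snd).of_isClosed_subset hcl (fun q hq => ⟨(y, q), hq, rfl⟩)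
  have hAconv : ∀ y : Fin n → ℝ, Convex ℝ {q : ℝ × ℝ | (y, q) ∈ K} := by
    intro y q1 h1 q2 h2 θa θb ha hb' hab
    have h := hKconv h1 h2 ha hb' hab
    have hy : θa • y + θb • y = y := by rw [← add_smul, hab, one_smul]
    simpa [Prod.smul_mk, Prod.mk_add_mk, hy] using h
  refine ⟨convex_univ, fun t0 _ t1 _ θa θb ha hb' hab => ?_⟩
  simp only [smul_eq_mul]
  have hvolS : ∀ t : ℝ, volume (shearMap n t '' K)
      = ∫⁻ y, volume (Prod.mk y ⁻¹' (shearMap n t '' K)) := by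
    intro t
    rw [Measure.volume_eq_prod, Measure.prod_apply (hSmeas t)]
  have key : ∀ y : Fin n → ℝ,
      volume (Prod.mk y ⁻¹' (shearMap n (θa * t0 + θb * t1) '' K))
        ≤ ENNReal.ofReal θa * volume (Prod.mk y ⁻¹' (shearMap n t0 '' K))
          + ENNReal.ofReal θb * volume (Prod.mk y ⁻¹' (shearMap n t1 '' K)) := by
    intro y
    rw [hfib, hfib, hfib]
    exact slice_vol_convex (hAc y) (hAconv y) ha hb' hab
  have hm : ∀ t : ℝ, Measurable (fun y => volume (Prod.mk y ⁻¹' (shearMap n t '' K))) := by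
    intro t
    exact measurable_measure_prodMk_left (hSmeas t)
  have hineq : volume (shearMap n (θa * t0 + θb * t1) '' K)
      ≤ ENNReal.ofReal θa * volume (shearMap n t0 '' K)
        + ENNReal.ofReal θb * volume (shearMap n t1 '' K) := by
    rw [hvolS, hvolS, hvolS]
    calc (∫⁻ y, volume (Prod.mk y ⁻¹' (shearMap n (θa * t0 + θb * t1) '' K)))
        ≤ ∫⁻ y, (ENNReal.ofReal θa * volume (Prod.mk y ⁻¹' (shearMap n t0 '' K))
            + ENNReal.ofReal θb * volume (Prod.mk y ⁻¹' (shearMap n t1 '' K))) :=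
          lintegral_mono key
      _ = (ENNReal.ofReal θa * ∫⁻ y, volume (Prod.mk y ⁻¹' (shearMap n t0 '' K)))
            + ENNReal.ofReal θb * ∫⁻ y, volume (Prod.mk y ⁻¹' (shearMap n t1 '' K)) := by
          rw [lintegral_add_left ((hm t0).const_mul _),
            lintegral_const_mul _ (hm t0), lintegral_const_mul _ (hm t1)]
  have hfin : ∀ t : ℝ, volume (shearMap n t '' K) ≠ ⊤ := fun t => (hSc t).measure_lt_top.ne
  have hrhs : ENNReal.ofReal θa * volume (shearMap n t0 '' K)
      + ENNReal.ofReal θb * volume (shearMap n t1 '' K) ≠ ⊤ :=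
    ENNReal.add_ne_top.mpr ⟨ENNReal.mul_ne_top ENNReal.ofReal_ne_top (hfin t0),
      ENNReal.mul_ne_top ENNReal.ofReal_ne_top (hfin t1)⟩
  rw [hvolC, hvolC, hvolC]
  calc (volume (shearMap n (θa * t0 + θb * t1) '' K)).toReal
      ≤ (ENNReal.ofReal θa * volume (shearMap n t0 '' K)
          + ENNReal.ofReal θb * volume (shearMap n t1 '' K)).toReal :=
        ENNReal.toReal_mono hrhs hineq
    _ = θa * (volume (shearMap n t0 '' K)).toReal
          + θb * (volume (shearMap n t1 '' K)).toReal := by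
        rw [ENNReal.toReal_add (ENNReal.mul_ne_top ENNReal.ofReal_ne_top (hfin t0))
            (ENNReal.mul_ne_top ENNReal.ofReal_ne_top (hfin t1)),
          ENNReal.toReal_mul, ENNReal.toReal_mul,
          ENNReal.toReal_ofReal ha, ENNReal.toReal_ofReal hb']


/-- Rogers–Shephard: the volume of the convex sets of a linear parameter system is a convex
function of the parameter. -/
theorem volume_linear_parameter_system_convex (d : ℕ) (I : Type*) [Nonempty I]
    (a : I → EuclideanSpace ℝ (Fin d)) (lam : I → ℝ)
    (ha : Bornology.IsBounded (Set.range a)) (hlam : Bornology.IsBounded (Set.range lam))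
    (e : EuclideanSpace ℝ (Fin d)) :
    ConvexOn ℝ Set.univ
      (fun t : ℝ =>
        (volume (convexHull ℝ (Set.range fun i => a i + (t * lam i) • e))).toReal) := by
  by_cases he : e = 0
  · simp only [he, smul_zero, add_zero]
    exact convexOn_const _ convex_univ
  cases d with
  | zero => exact absurd (PiLp.ext fun i => i.elim0) he
  | succ n =>
    have hcompl : IsCompl (ℝ ∙ e) (ℝ ∙ e)ᗮ :=
      Submodule.isCompl_orthogonal_of_hasOrthogonalProjection
    have hrank : Module.finrank ℝ
        ((ℝ ∙ e)ᗮ : Submodule ℝ (EuclideanSpace ℝ (Fin (n + 1)))) = n := by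
      have h1 : Module.finrank ℝ
          ((ℝ ∙ e : Submodule ℝ (EuclideanSpace ℝ (Fin (n + 1))))) = 1 :=
        finrank_span_singleton he
      have h2 := Submodule.finrank_add_finrank_orthogonal
        (K := (ℝ ∙ e : Submodule ℝ (EuclideanSpace ℝ (Fin (n + 1)))))
      rw [h1, finrank_euclideanSpace_fin] at h2
      omega
    let Q : ((ℝ ∙ e)ᗮ : Submodule ℝ (EuclideanSpace ℝ (Fin (n + 1)))) ≃ₗ[ℝ] (Fin n → ℝ) :=
      LinearEquiv.ofFinrankEq _ _ (by rw [hrank, Module.finrank_fin_fun])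
    let R : (ℝ ∙ e : Submodule ℝ (EuclideanSpace ℝ (Fin (n + 1)))) ≃ₗ[ℝ] ℝ :=
      (LinearEquiv.toSpanNonzeroSingleton ℝ _ e he).symm
    let T0 : EuclideanSpace ℝ (Fin (n + 1)) ≃ₗ[ℝ] ((Fin n → ℝ) × ℝ) :=
      (Submodule.prodEquivOfIsCompl _ _ hcompl).symm ≪≫ₗ (R.prodCongr Q) ≪≫ₗ
        LinearEquiv.prodComm ℝ ℝ (Fin n → ℝ)
    have hTe : T0 e = ((0 : Fin n → ℝ), (1 : ℝ)) := by
      have h1 : (Submodule.prodEquivOfIsCompl _ _ hcompl).symm e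
          = ((⟨e, Submodule.mem_span_singleton_self e⟩ :
              (ℝ ∙ e : Submodule ℝ (EuclideanSpace ℝ (Fin (n + 1))))), 0) :=
        (LinearEquiv.symm_apply_eq _).mpr (by
          rw [Submodule.coe_prodEquivOfIsCompl']
          simp)
      have h2 : R ⟨e, Submodule.mem_span_singleton_self e⟩ = 1 :=
        (LinearEquiv.symm_apply_eq _).mpr
          (LinearEquiv.toSpanNonzeroSingleton_one ℝ _ e he).symm
      simp only [T0, LinearEquiv.trans_apply, h1, LinearEquiv.prodCongr_apply,
        map_zero, LinearEquiv.prodComm_apply, Prod.swap, h2]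
    let Tc : EuclideanSpace ℝ (Fin (n + 1)) ≃L[ℝ] ((Fin n → ℝ) × ℝ) :=
      T0.toContinuousLinearEquiv
    haveI : (volume : Measure ((Fin n → ℝ) × ℝ)).IsAddHaarMeasure := by
      rw [Measure.volume_eq_prod]; infer_instance
    set κ : NNReal := Measure.addHaarScalarFactor (Measure.map Tc volume)
      (volume : Measure ((Fin n → ℝ) × ℝ)) with hκ
    have hmap : Measure.map Tc volume = κ • (volume : Measure ((Fin n → ℝ) × ℝ)) :=
      Measure.isAddLeftInvariant_eq_smul _ _
    have hvol : ∀ s : Set (EuclideanSpace ℝ (Fin (n + 1))),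
        volume s = (κ : ENNReal) * volume (Tc '' s) := by
      intro s
      have hf : MeasurableEmbedding Tc := Tc.toHomeomorph.measurableEmbedding
      have h1 : Measure.map Tc volume (Tc '' s) = volume (Tc ⁻¹' (Tc '' s)) :=
        hf.map_apply _ _
      rw [Set.preimage_image_eq _ Tc.injective] at h1
      rw [← h1, hmap, Measure.smul_apply]
      simp [ENNReal.smul_def]
    have hb1 : IsBounded (⇑Tc '' range a) :=
      ((Tc : EuclideanSpace ℝ (Fin (n + 1)) →L[ℝ] ((Fin n → ℝ) × ℝ)).lipschitz).isBounded_image ha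
    have hbdd : IsBounded
        (range fun i => (((Tc (a i)).1, (Tc (a i)).2, lam i) : (Fin n → ℝ) × ℝ × ℝ)) := by
      apply IsBounded.subset
        (((LipschitzWith.prod_fst.isBounded_image hb1).prod
          ((LipschitzWith.prod_snd.isBounded_image hb1).prod hlam)))
      rintro _ ⟨i, rfl⟩
      refine Set.mem_prod.mpr ⟨?_, Set.mem_prod.mpr ⟨?_, ⟨i, rfl⟩⟩⟩
      · exact mem_image_of_mem Prod.fst (mem_image_of_mem _ (mem_range_self i))
      · exact mem_image_of_mem Prod.snd (mem_image_of_mem _ (mem_range_self i))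
    have hcore := core n (fun i => (Tc (a i)).1) (fun i => (Tc (a i)).2) lam hbdd
    have himg : ∀ t : ℝ, ⇑Tc '' (convexHull ℝ (range fun i => a i + (t * lam i) • e))
        = convexHull ℝ
          (range fun i => (((Tc (a i)).1, (Tc (a i)).2 + t * lam i) : (Fin n → ℝ) × ℝ)) := by
      intro t
      rw [show (⇑Tc : EuclideanSpace ℝ (Fin (n + 1)) → ((Fin n → ℝ) × ℝ))
          = ⇑(T0.toLinearMap) from T0.coe_toContinuousLinearEquiv',
        (T0.toLinearMap).image_convexHull, ← Set.range_comp]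
      congr 1
      refine congrArg Set.range (funext fun i => ?_)
      show T0 (a i + (t * lam i) • e) = _
      rw [map_add, _root_.map_smul, hTe]
      have : (t * lam i) • ((0 : Fin n → ℝ), (1 : ℝ)) = ((0 : Fin n → ℝ), t * lam i) := by
        rw [Prod.smul_mk, smul_zero, smul_eq_mul, mul_one]
      rw [this]
      have hTca : Tc (a i) = T0 (a i) := rfl
      rw [Prod.ext_iff]
      constructor
      · simp [hTca]
      · simp [hTca]
    have hfun : (fun t : ℝ =>
        (volume (convexHull ℝ (range fun i => a i + (t * lam i) • e))).toReal)
        = (κ : ℝ) • fun t : ℝ => (volume (convexHull ℝ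
          (range fun i => (((Tc (a i)).1, (Tc (a i)).2 + t * lam i) : (Fin n → ℝ) × ℝ)))).toReal := by
      funext t
      rw [Pi.smul_apply, hvol, himg t, ENNReal.toReal_mul, ENNReal.coe_toReal, smul_eq_mul]
    rw [hfun]
    exact hcore.smul κ.coe_nonneg
end
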